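/- Let X and Y be uncorrelated centered real random variables with Var[X] + Var[Y] = 1, Var[X] > 0, and let N be standard normal. Then d_W(X + Y, N) ≤ d_W(X/√Var[X], N) + 2·(Var[Y])^{1/2}. -/

import Mathlib

open MeasureTheory ProbabilityTheory

/-- Wasserstein-type distance: sup over 1-Lipschitz test functions. -/
noncomputable def dW {Ω : Type*} [MeasurableSpace Ω] (μ : Measure Ω) (X Y : Ω → ℝ) : ℝ :=
  ⨆ h : {h : ℝ → ℝ // LipschitzWith 1 h}, |(∫ ω, h.1 (X ω) ∂μ) - ∫ ω, h.1 (Y ω) ∂μ|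

section Aux

lemma integrable_id_gaussianReal01 : Integrable (fun x : ℝ => x) (gaussianReal 0 1) := by
  rw [gaussianReal_of_var_ne_zero 0 one_ne_zero,
    integrable_withDensity_iff (measurable_gaussianPDF 0 1)
      (ae_of_all _ fun x => ENNReal.ofReal_lt_top)]
  simp_rw [gaussianPDF, ENNReal.toReal_ofReal (gaussianPDFReal_nonneg _ _ _)]
  have h : Integrable (fun x : ℝ => x * Real.exp (-(2⁻¹ : ℝ) * x ^ 2)) := by
    have := integrable_rpow_mul_exp_neg_mul_sq (b := (2⁻¹ : ℝ)) (by norm_num) (s := 1)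
      (by norm_num)
    simpa using this
  have : Integrable (fun x : ℝ => (Real.sqrt (2 * Real.pi))⁻¹ *
      (x * Real.exp (-(2⁻¹ : ℝ) * x ^ 2))) := h.const_mul _
  refine this.congr (ae_of_all _ fun x => ?_)
  simp only [gaussianPDFReal, NNReal.coe_one, mul_one, sub_zero]
  ring_nf

variable {Ω : Type*} [MeasurableSpace Ω] {μ : Measure Ω} [IsProbabilityMeasure μ]

lemma lip_comp_integrable {Z : Ω → ℝ} (hZ : Integrable Z μ) {h : ℝ → ℝ}
    (hh : LipschitzWith 1 h) : Integrable (fun ω => h (Z ω)) μ := by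
  have hm : AEStronglyMeasurable (fun ω => h (Z ω)) μ :=
    hh.continuous.comp_aestronglyMeasurable hZ.1
  refine (hZ.abs.add (integrable_const |h 0|)).mono' hm (ae_of_all _ fun ω => ?_)
  have h1 : dist (h (Z ω)) (h 0) ≤ 1 * dist (Z ω) 0 := hh.dist_le_mul _ _
  simp only [Real.dist_eq, one_mul, sub_zero] at h1
  have : |h (Z ω)| ≤ |h (Z ω) - h 0| + |h 0| := by
    calc |h (Z ω)| = |(h (Z ω) - h 0) + h 0| := by ring_nf
    _ ≤ |h (Z ω) - h 0| + |h 0| := abs_add_le _ _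
  simp only [Real.norm_eq_abs, Pi.add_apply, Pi.abs_apply]
  linarith

lemma lip_integral_diff_le {Z W : Ω → ℝ} (hZ : Integrable Z μ) (hW : Integrable W μ)
    {h : ℝ → ℝ} (hh : LipschitzWith 1 h) :
    |(∫ ω, h (Z ω) ∂μ) - ∫ ω, h (W ω) ∂μ| ≤ ∫ ω, |Z ω - W ω| ∂μ := by
  have hi1 := lip_comp_integrable hZ hh
  have hi2 := lip_comp_integrable hW hh
  rw [← integral_sub hi1 hi2]
  calc |∫ ω, (h (Z ω) - h (W ω)) ∂μ| ≤ ∫ ω, |h (Z ω) - h (W ω)| ∂μ := by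
        simpa [Real.norm_eq_abs] using
          norm_integral_le_integral_norm (fun ω => h (Z ω) - h (W ω)) (μ := μ)
  _ ≤ ∫ ω, |Z ω - W ω| ∂μ := by
      refine integral_mono (hi1.sub hi2).abs (hZ.sub hW).abs fun ω => ?_
      have h1 : dist (h (Z ω)) (h (W ω)) ≤ 1 * dist (Z ω) (W ω) := hh.dist_le_mul _ _
      simpa [Real.dist_eq] using h1

lemma dW_bddAbove {Z W : Ω → ℝ} (hZ : Integrable Z μ) (hW : Integrable W μ) :
    BddAbove (Set.range fun h : {h : ℝ → ℝ // LipschitzWith 1 h} =>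
      |(∫ ω, h.1 (Z ω) ∂μ) - ∫ ω, h.1 (W ω) ∂μ|) := by
  refine ⟨∫ ω, |Z ω - W ω| ∂μ, ?_⟩
  rintro x ⟨h, rfl⟩
  exact lip_integral_diff_le hZ hW h.2

lemma abs_integral_le_sqrt_variance {X : Ω → ℝ} (hX2 : MemLp X 2 μ)
    (hX0 : ∫ ω, X ω ∂μ = 0) : ∫ ω, |X ω| ∂μ ≤ Real.sqrt (variance X μ) := by
  have hvX : variance X μ = ∫ ω, X ω ^ 2 ∂μ := by
    rw [variance_eq_sub hX2]
    simp only [Pi.pow_apply, hX0]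
    ring
  have habs : MemLp (fun ω => |X ω|) 2 μ := by
    simpa [Pi.abs_def] using hX2.abs
  have hv := variance_nonneg (fun ω => |X ω|) μ
  rw [variance_eq_sub habs] at hv
  simp only [Pi.pow_apply, sq_abs] at hv
  have h2 : (∫ ω, |X ω| ∂μ) ^ 2 ≤ variance X μ := by rw [hvX]; linarith
  have h3 : ∫ ω, |X ω| ∂μ = Real.sqrt ((∫ ω, |X ω| ∂μ) ^ 2) :=
    (Real.sqrt_sq (integral_nonneg fun ω => abs_nonneg _)).symm
  rw [h3]
  exact Real.sqrt_le_sqrt h2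

end Aux
theorem wasserstein_uncorrelated_pair
    {Ω : Type*} [MeasurableSpace Ω] (μ : Measure Ω) [IsProbabilityMeasure μ]
    (X Y N : Ω → ℝ)
    (hX2 : MemLp X 2 μ) (hY2 : MemLp Y 2 μ)
    (hX0 : ∫ ω, X ω ∂μ = 0) (hY0 : ∫ ω, Y ω ∂μ = 0)
    (huncorr : ∫ ω, X ω * Y ω ∂μ = 0)
    (hvar : variance X μ + variance Y μ = 1) (hXpos : 0 < variance X μ)
    (hN : Measure.map N μ = gaussianReal 0 1) :
    dW μ (fun ω => X ω + Y ω) N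
      ≤ dW μ (fun ω => X ω / Real.sqrt (variance X μ)) N
        + 2 * Real.sqrt (variance Y μ) := by
  set σ : ℝ := Real.sqrt (variance X μ) with hσ
  set τ : ℝ := Real.sqrt (variance Y μ) with hτ
  have hσpos : 0 < σ := Real.sqrt_pos.mpr hXpos
  have hσsq : σ ^ 2 = variance X μ := Real.sq_sqrt hXpos.le
  have hτnn : 0 ≤ τ := Real.sqrt_nonneg _
  have hτsq : τ ^ 2 = variance Y μ := Real.sq_sqrt (variance_nonneg _ _)
  have hσle : σ ≤ 1 := by
    rw [hσ, show (1 : ℝ) = Real.sqrt 1 by simp]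
    exact Real.sqrt_le_sqrt (by nlinarith [variance_nonneg Y μ])
  have hτle : τ ≤ 1 := by
    rw [hτ, show (1 : ℝ) = Real.sqrt 1 by simp]
    exact Real.sqrt_le_sqrt (by nlinarith)
  -- integrability
  have hXi : Integrable X μ := hX2.integrable one_le_two
  have hYi : Integrable Y μ := hY2.integrable one_le_two
  have hNae : AEMeasurable N μ := by
    by_contra hc
    rw [Measure.map_of_not_aemeasurable hc] at hN
    have h1 : (gaussianReal 0 1) Set.univ = 1 := measure_univ
    rw [← hN] at h1
    simp at h1
  have hNi : Integrable N μ := by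
    have h1 : Integrable id (Measure.map N μ) := by
      rw [hN]; exact integrable_id_gaussianReal01
    rw [integrable_map_measure aestronglyMeasurable_id hNae] at h1
    exact h1
  have hXσi : Integrable (fun ω => X ω / σ) μ := hXi.div_const σ
  have hXYi : Integrable (fun ω => X ω + Y ω) μ := hXi.add hYi
  -- moment bounds
  have hEX : ∫ ω, |X ω| ∂μ ≤ σ := abs_integral_le_sqrt_variance hX2 hX0
  have hEY : ∫ ω, |Y ω| ∂μ ≤ τ := abs_integral_le_sqrt_variance hY2 hY0
  -- the coupling bound
  have hkey : ∫ ω, |(X ω + Y ω) - X ω / σ| ∂μ ≤ 2 * τ := by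
    have hptwise : ∀ ω, |(X ω + Y ω) - X ω / σ| ≤ |1 - σ⁻¹| * |X ω| + |Y ω| := by
      intro ω
      have : (X ω + Y ω) - X ω / σ = (1 - σ⁻¹) * X ω + Y ω := by
        field_simp; ring
      rw [this]
      calc |(1 - σ⁻¹) * X ω + Y ω| ≤ |(1 - σ⁻¹) * X ω| + |Y ω| := abs_add_le _ _
      _ = |1 - σ⁻¹| * |X ω| + |Y ω| := by rw [abs_mul]
    have h1 : ∫ ω, |(X ω + Y ω) - X ω / σ| ∂μ
        ≤ ∫ ω, (|1 - σ⁻¹| * |X ω| + |Y ω|) ∂μ := by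
      refine integral_mono (hXYi.sub hXσi).abs ((hXi.abs.const_mul _).add hYi.abs) hptwise
    have h2 : ∫ ω, (|1 - σ⁻¹| * |X ω| + |Y ω|) ∂μ
        = |1 - σ⁻¹| * ∫ ω, |X ω| ∂μ + ∫ ω, |Y ω| ∂μ := by
      rw [integral_add (hXi.abs.const_mul _) hYi.abs, integral_const_mul]
    have h3 : |1 - σ⁻¹| * ∫ ω, |X ω| ∂μ ≤ |1 - σ⁻¹| * σ :=
      mul_le_mul_of_nonneg_left hEX (abs_nonneg _)
    have h4 : |1 - σ⁻¹| * σ = 1 - σ := by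
      have e : 1 - σ⁻¹ = (σ - 1) / σ := by field_simp
      rw [e, abs_div, abs_of_pos hσpos, div_mul_cancel₀ _ hσpos.ne',
        abs_sub_comm, abs_of_nonneg (by linarith)]
    have h5 : 1 - σ ≤ τ := by nlinarith
    linarith
  -- sup argument
  haveI : Nonempty {h : ℝ → ℝ // LipschitzWith 1 h} := ⟨⟨id, LipschitzWith.id⟩⟩
  rw [dW]
  refine ciSup_le fun h => ?_
  have hmid : |(∫ ω, h.1 (X ω / σ) ∂μ) - ∫ ω, h.1 (N ω) ∂μ|
      ≤ dW μ (fun ω => X ω / Real.sqrt (variance X μ)) N :=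
    le_ciSup (dW_bddAbove hXσi hNi) h
  have hfirst : |(∫ ω, h.1 (X ω + Y ω) ∂μ) - ∫ ω, h.1 (X ω / σ) ∂μ|
      ≤ ∫ ω, |(X ω + Y ω) - X ω / σ| ∂μ := lip_integral_diff_le hXYi hXσi h.2
  calc |(∫ ω, h.1 (X ω + Y ω) ∂μ) - ∫ ω, h.1 (N ω) ∂μ|
      ≤ |(∫ ω, h.1 (X ω + Y ω) ∂μ) - ∫ ω, h.1 (X ω / σ) ∂μ|
        + |(∫ ω, h.1 (X ω / σ) ∂μ) - ∫ ω, h.1 (N ω) ∂μ| := abs_sub_le _ _ _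
  _ ≤ dW μ (fun ω => X ω / Real.sqrt (variance X μ)) N + 2 * τ := by
      have := le_trans hfirst hkey
      linarith
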